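/- Let X₁, …, X_N be independent real random variables, each distributed with density f(x) = 1/(π√(1−x²)) on (−1, 1) (and 0 elsewhere), let a₁, …, a_N be positive real numbers, and let A ⊆ {1, …, N} with nonempty complement B. Write S_A = ∑_{i∈A} a_i and σ_B² = (1/2)∑_{i∈B} a_i². Then for every real v ≥ S_A, P( ∑_{i=1}^N a_i X_i > v ) ≤ exp( −(v − S_A)² / (2σ_B²) ). -/

import Mathlib

open Real MeasureTheory ProbabilityTheory

/-- The arcsine density `f(x) = 1/(pi * sqrt(1-x^2))` on `(-1,1)` (and `0` elsewhere), the common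
distribution of the random variables `X_gamma` in the limiting logarithmic distributions of
prime number races. -/
noncomputable def arcsineDensity (x : ℝ) : ℝ :=
  if |x| < 1 then 1 / (Real.pi * Real.sqrt (1 - x ^ 2)) else 0

section Aux

lemma arcsineDensity_nonneg (x : ℝ) : 0 ≤ arcsineDensity x := by
  unfold arcsineDensity
  split
  · positivity
  · exact le_refl 0

lemma arcsineDensity_neg (x : ℝ) : arcsineDensity (-x) = arcsineDensity x := by
  unfold arcsineDensity
  rw [abs_neg, neg_pow]
  norm_num

lemma measurable_arcsineDensity : Measurable arcsineDensity := by
  unfold arcsineDensity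
  apply Measurable.ite (measurableSet_lt measurable_abs measurable_const)
  · exact measurable_const.div
      (measurable_const.mul ((measurable_const.sub (measurable_id.pow_const 2)).sqrt))
  · exact measurable_const

/-- The arcsine measure on `ℝ`. -/
noncomputable def arcMeasure : Measure ℝ :=
  MeasureTheory.volume.withDensity (fun x => ENNReal.ofReal (arcsineDensity x))

lemma arcMeasure_ae : ∀ᵐ x ∂arcMeasure, |x| < 1 := by
  rw [ae_iff]
  have hs : MeasurableSet {x : ℝ | ¬ |x| < 1} := by
    have h : {x : ℝ | ¬ |x| < 1} = {x : ℝ | |x| < 1}ᶜ := rfl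
    rw [h]
    exact (measurableSet_lt measurable_abs measurable_const).compl
  rw [arcMeasure, withDensity_apply _ hs]
  have h0 : ∀ x ∈ {x : ℝ | ¬ |x| < 1},
      ENNReal.ofReal (arcsineDensity x) = (fun _ : ℝ => (0 : ENNReal)) x := by
    intro x hx
    simp [arcsineDensity, if_neg hx]
  rw [setLIntegral_congr_fun hs h0]
  simp

lemma integral_arcMeasure (g : ℝ → ℝ) :
    ∫ x, g x ∂arcMeasure = ∫ x, arcsineDensity x * g x := by
  rw [arcMeasure]
  have h : (fun x => ENNReal.ofReal (arcsineDensity x)) =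
      fun x => ((Real.toNNReal (arcsineDensity x) : NNReal) : ENNReal) := rfl
  rw [h, integral_withDensity_eq_integral_smul measurable_arcsineDensity.real_toNNReal g]
  congr 1
  ext x
  rw [NNReal.smul_def, smul_eq_mul, Real.coe_toNNReal _ (arcsineDensity_nonneg x)]

lemma integrable_arc {g : ℝ → ℝ} (hg : Measurable g) (C : ℝ)
    (hC : ∀ x : ℝ, |x| < 1 → |g x| ≤ C) [IsFiniteMeasure arcMeasure] :
    Integrable g arcMeasure := by
  refine Integrable.mono' (integrable_const C) hg.aestronglyMeasurable ?_
  filter_upwards [arcMeasure_ae] with x hx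
  simpa [Real.norm_eq_abs] using hC x hx

lemma integrable_exp_arc (c : ℝ) [IsFiniteMeasure arcMeasure] :
    Integrable (fun x => Real.exp (c * x)) arcMeasure := by
  refine integrable_arc (Real.measurable_exp.comp (measurable_id.const_mul c)) (Real.exp |c|)
    (fun x hx => ?_)
  rw [abs_of_pos (Real.exp_pos _)]
  apply Real.exp_le_exp.2
  calc c * x ≤ |c * x| := le_abs_self _
    _ = |c| * |x| := abs_mul c x
    _ ≤ |c| * 1 := by nlinarith [abs_nonneg c, hx.le]
    _ = |c| := mul_one _

lemma integrable_sq_arc [IsFiniteMeasure arcMeasure] :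
    Integrable (fun x : ℝ => x ^ 2) arcMeasure := by
  refine integrable_arc (measurable_id.pow_const 2) 1 (fun x hx => ?_)
  rw [abs_of_nonneg (sq_nonneg x)]
  have h := abs_lt.1 hx
  nlinarith [h.1, h.2]

lemma integrable_one_sub_sq_arc [IsFiniteMeasure arcMeasure] :
    Integrable (fun x : ℝ => 1 - x ^ 2) arcMeasure :=
  (integrable_const 1).sub integrable_sq_arc

lemma integral_sq_arcMeasure [IsProbabilityMeasure arcMeasure] :
    ∫ x, x ^ 2 ∂arcMeasure = 1 / 2 := by
  have h1 : ∫ x, (1 : ℝ) ∂arcMeasure = 1 := by simp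
  have hpt : ∀ x : ℝ, arcsineDensity x * (1 - x ^ 2) = Real.sqrt (1 - x ^ 2) / Real.pi := by
    intro x
    unfold arcsineDensity
    by_cases hx : |x| < 1
    · rw [if_pos hx]
      have hx2 : 0 < 1 - x ^ 2 := by
        rw [abs_lt] at hx; nlinarith [hx.1, hx.2]
      have hs : 0 < Real.sqrt (1 - x ^ 2) := Real.sqrt_pos.2 hx2
      have hsq : (1 : ℝ) - x ^ 2 = Real.sqrt (1 - x ^ 2) * Real.sqrt (1 - x ^ 2) := by
        nlinarith [Real.sq_sqrt hx2.le]
      field_simp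
      linear_combination hsq
    · rw [if_neg hx]
      have hx2 : 1 - x ^ 2 ≤ 0 := by
        rw [abs_lt, not_and_or, not_lt, not_lt] at hx
        rcases hx with h | h <;> nlinarith
      rw [Real.sqrt_eq_zero'.mpr hx2]
      simp
  have key : ∫ x, (1 - x ^ 2 : ℝ) ∂arcMeasure = 1 / 2 := by
    rw [integral_arcMeasure]
    simp_rw [hpt]
    rw [integral_div]
    have hsqrt : ∫ x : ℝ, Real.sqrt (1 - x ^ 2) = Real.pi / 2 := by
      rw [← setIntegral_eq_integral_of_forall_compl_eq_zero
        (s := Set.Ioc (-1 : ℝ) 1) (f := fun x : ℝ => Real.sqrt (1 - x ^ 2)) ?_]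
      · rw [← intervalIntegral.integral_of_le (by norm_num : (-1 : ℝ) ≤ 1)]
        exact integral_sqrt_one_sub_sq
      · intro x hx
        apply Real.sqrt_eq_zero'.mpr
        simp only [Set.mem_Ioc, not_and_or, not_lt, not_le] at hx
        rcases hx with h | h <;> nlinarith
    rw [hsqrt]
    field_simp
  have h3 : ∫ x, x ^ 2 ∂arcMeasure = ∫ x, ((1 : ℝ) - (1 - x ^ 2)) ∂arcMeasure := by
    congr 1; ext x; ring
  rw [h3, integral_sub (integrable_const 1) integrable_one_sub_sq_arc, h1, key]
  norm_num

/-- `sinh (y * u) ≤ y * sinh u` for `0 ≤ y ≤ 1`, `0 ≤ u`. -/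
lemma sinh_mul_le {y u : ℝ} (hy0 : 0 ≤ y) (hy1 : y ≤ 1) (hu : 0 ≤ u) :
    Real.sinh (y * u) ≤ y * Real.sinh u := by
  set h : ℝ → ℝ := fun v => y * Real.sinh v - Real.sinh (y * v) with hh
  have hd : ∀ v : ℝ, HasDerivAt h (y * Real.cosh v - Real.cosh (y * v) * y) v := by
    intro v
    have h1 : HasDerivAt (fun v : ℝ => y * Real.sinh v) (y * Real.cosh v) v :=
      (Real.hasDerivAt_sinh v).const_mul y
    have h2 : HasDerivAt (fun v : ℝ => Real.sinh (y * v)) (Real.cosh (y * v) * y) v := by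
      have := (Real.hasDerivAt_sinh (y * v)).comp v ((hasDerivAt_id v).const_mul y)
      simp only [id_eq, mul_one] at this
      exact this
    exact h1.sub h2
  have hmono : MonotoneOn h (Set.Ici 0) := by
    apply monotoneOn_of_deriv_nonneg (convex_Ici 0)
    · exact ((continuous_const.mul Real.continuous_sinh).sub
        (Real.continuous_sinh.comp (continuous_const.mul continuous_id))).continuousOn
    · intro v _
      exact ((hd v).differentiableAt).differentiableWithinAt
    · intro v hv
      rw [interior_Ici] at hv
      rw [(hd v).deriv]
      have hvy : Real.cosh (y * v) ≤ Real.cosh v := by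
        apply Real.cosh_le_cosh.2
        rw [abs_mul, abs_of_nonneg hy0, abs_of_pos hv]
        nlinarith [le_of_lt (Set.mem_Ioi.mp hv)]
      nlinarith
  have h0 : h 0 = 0 := by simp [hh]
  have := hmono (Set.self_mem_Ici) (Set.mem_Ici.mpr hu) hu
  rw [h0] at this
  simp only [hh] at this
  linarith

/-- Key pointwise bound: `cosh (t * x) ≤ 1 + x ^ 2 * (cosh t - 1)` for `|x| ≤ 1`. -/
lemma cosh_mul_le_aux {x t : ℝ} (hx : |x| ≤ 1) :
    Real.cosh (t * x) ≤ 1 + x ^ 2 * (Real.cosh t - 1) := by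
  have key : ∀ s y : ℝ, 0 ≤ s → 0 ≤ y → y ≤ 1 →
      Real.cosh (s * y) ≤ 1 + y ^ 2 * (Real.cosh s - 1) := by
    intro s y hs hy0 hy1
    have h1 : Real.cosh (s * y) = 2 * Real.sinh (y * (s / 2)) ^ 2 + 1 := by
      have := Real.cosh_two_mul (y * (s / 2))
      rw [show 2 * (y * (s / 2)) = s * y by ring] at this
      have h2 := Real.cosh_sq (y * (s / 2))
      linarith
    have h2 : Real.cosh s = 2 * Real.sinh (s / 2) ^ 2 + 1 := by
      have := Real.cosh_two_mul (s / 2)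
      rw [show 2 * (s / 2) = s by ring] at this
      have h2 := Real.cosh_sq (s / 2)
      linarith
    have h3 : Real.sinh (y * (s / 2)) ≤ y * Real.sinh (s / 2) :=
      sinh_mul_le hy0 hy1 (by positivity)
    have h4 : 0 ≤ Real.sinh (y * (s / 2)) := by
      rw [← Real.sinh_zero]
      exact Real.sinh_le_sinh.2 (by positivity)
    nlinarith [h3, h4]
  have e1 : Real.cosh (t * x) = Real.cosh (|t| * |x|) := by
    rw [← abs_mul, Real.cosh_abs]
  have e2 : Real.cosh t = Real.cosh |t| := (Real.cosh_abs t).symm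
  have h := key |t| |x| (abs_nonneg t) (abs_nonneg x) hx
  rw [e1, e2]
  calc Real.cosh (|t| * |x|) ≤ 1 + |x| ^ 2 * (Real.cosh |t| - 1) := h
    _ = 1 + x ^ 2 * (Real.cosh |t| - 1) := by rw [sq_abs]

/-- The mgf bound for the arcsine measure: `∫ exp (t x) ≤ exp (t²/4)`. -/
lemma integral_exp_arc_le [IsProbabilityMeasure arcMeasure] (t : ℝ) :
    ∫ x, Real.exp (t * x) ∂arcMeasure ≤ Real.exp (t ^ 2 / 4) := by
  have hsymm : ∫ x, Real.exp (t * x) ∂arcMeasure = ∫ x, Real.exp (-t * x) ∂arcMeasure := by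
    rw [integral_arcMeasure, integral_arcMeasure]
    have h := MeasureTheory.integral_neg_eq_self
      (fun x => arcsineDensity x * Real.exp (t * x)) MeasureTheory.volume
    calc ∫ x, arcsineDensity x * Real.exp (t * x)
        = ∫ x, arcsineDensity (-x) * Real.exp (t * (-x)) := h.symm
      _ = ∫ x, arcsineDensity x * Real.exp (-t * x) := by
          congr 1; ext x; rw [arcsineDensity_neg]; ring_nf
  have hcosh : ∫ x, Real.exp (t * x) ∂arcMeasure = ∫ x, Real.cosh (t * x) ∂arcMeasure := by
    have h2 : ∫ x, Real.exp (t * x) ∂arcMeasure =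
        ((∫ x, Real.exp (t * x) ∂arcMeasure) + ∫ x, Real.exp (-t * x) ∂arcMeasure) / 2 := by
      rw [← hsymm]; ring
    rw [h2, ← integral_add (integrable_exp_arc t) (integrable_exp_arc (-t))]
    rw [← integral_div]
    congr 1; ext x
    rw [Real.cosh_eq]
    ring_nf
  rw [hcosh]
  have hmono : ∫ x, Real.cosh (t * x) ∂arcMeasure ≤
      ∫ x, (1 + x ^ 2 * (Real.cosh t - 1)) ∂arcMeasure := by
    apply integral_mono_ae
    · refine integrable_arc (Real.measurable_cosh.comp (measurable_id.const_mul t))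
        (Real.cosh t) (fun x hx => ?_)
      rw [abs_of_pos (Real.cosh_pos _)]
      apply Real.cosh_le_cosh.2
      rw [abs_mul]
      calc |t| * |x| ≤ |t| * 1 := by nlinarith [abs_nonneg t, hx.le]
        _ = |t| := mul_one _
        _ ≤ |t| := le_refl _
    · exact (integrable_const 1).add (integrable_sq_arc.mul_const _)
    · filter_upwards [arcMeasure_ae] with x hx
      exact cosh_mul_le_aux hx.le
  have hcalc : ∫ x, (1 + x ^ 2 * (Real.cosh t - 1)) ∂arcMeasure
      = 1 + (Real.cosh t - 1) / 2 := by
    rw [integral_add (integrable_const 1) (integrable_sq_arc.mul_const _)]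
    rw [integral_mul_const, integral_sq_arcMeasure]
    simp
    ring
  have hfinal : 1 + (Real.cosh t - 1) / 2 ≤ Real.exp (t ^ 2 / 4) := by
    have hid : 1 + (Real.cosh t - 1) / 2 = Real.cosh (t / 2) ^ 2 := by
      have h1 := Real.cosh_two_mul (t / 2)
      rw [show 2 * (t / 2) = t by ring] at h1
      have h2 := Real.cosh_sq (t / 2)
      linarith
    rw [hid]
    calc Real.cosh (t / 2) ^ 2 ≤ Real.exp ((t / 2) ^ 2 / 2) ^ 2 := by
          apply pow_le_pow_left₀ (Real.cosh_pos _).le (Real.cosh_le_exp_half_sq _)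
      _ = Real.exp (t ^ 2 / 4) := by
          rw [sq, ← Real.exp_add]
          congr 1; ring
  calc ∫ x, Real.cosh (t * x) ∂arcMeasure
      ≤ ∫ x, (1 + x ^ 2 * (Real.cosh t - 1)) ∂arcMeasure := hmono
    _ = 1 + (Real.cosh t - 1) / 2 := hcalc
    _ ≤ Real.exp (t ^ 2 / 4) := hfinal

lemma integral_exp_arc_le_of_nonneg [IsProbabilityMeasure arcMeasure] {c : ℝ} (hc : 0 ≤ c) :
    ∫ x, Real.exp (c * x) ∂arcMeasure ≤ Real.exp c := by
  calc ∫ x, Real.exp (c * x) ∂arcMeasure ≤ ∫ _x, Real.exp c ∂arcMeasure := by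
        apply integral_mono_ae (integrable_exp_arc c) (integrable_const _)
        filter_upwards [arcMeasure_ae] with x hx
        apply Real.exp_le_exp.2
        nlinarith [hx.le, abs_le.1 hx.le]
    _ = Real.exp c := by simp

end Aux

/-- The Chernoff-type bound of Theorem 3 (inequality (2.15)): if `X_1, ..., X_N` are independent
with the arcsine density, `a i > 0`, `A` has nonempty complement `B`,
`S_A = sum_{i in A} a i` and `sigma_B^2 = (1/2) * sum_{i in B} (a i)^2`, then for `v >= S_A`,
`P(sum_i a i * X i > v) <= exp (-(v - S_A)^2/(2 sigma_B^2))`. -/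
theorem prob_sum_arcsine_gt_le {Ω : Type*} [MeasurableSpace Ω] (μ : Measure Ω)
    [IsProbabilityMeasure μ] (N : ℕ) (hN : 1 ≤ N) (X : Fin N → Ω → ℝ)
    (hmeas : ∀ i, Measurable (X i))
    (hdist : ∀ i, Measure.map (X i) μ =
      MeasureTheory.volume.withDensity (fun x => ENNReal.ofReal (arcsineDensity x)))
    (hindep : iIndepFun X μ)
    (a : Fin N → ℝ) (ha : ∀ i, 0 < a i) (A : Finset (Fin N)) (hB : Aᶜ.Nonempty)
    (v : ℝ) (hv : ∑ i ∈ A, a i ≤ v) :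
    μ {ω | v < ∑ i, a i * X i ω} ≤
      ENNReal.ofReal
        (Real.exp (-(v - ∑ i ∈ A, a i) ^ 2 / (2 * ((1 / 2) * ∑ i ∈ Aᶜ, (a i) ^ 2)))) := by
  classical
  have hmap : ∀ i, Measure.map (X i) μ = arcMeasure := hdist
  haveI hprob : IsProbabilityMeasure arcMeasure := by
    rw [show arcMeasure = Measure.map (X ⟨0, hN⟩) μ from (hmap _).symm]
    exact Measure.isProbabilityMeasure_map (hmeas _).aemeasurable
  set S := ∑ i ∈ A, a i with hS
  set Q := ∑ i ∈ Aᶜ, (a i) ^ 2 with hQ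
  have hQpos : 0 < Q := Finset.sum_pos (fun i _ => pow_pos (ha i) 2) hB
  set w := v - S with hw
  have hw0 : 0 ≤ w := sub_nonneg.2 hv
  set t := 2 * w / Q with ht
  have ht0 : 0 ≤ t := by positivity
  -- transfer of integrability and mgf values
  have hint_base : ∀ (c : ℝ) i, Integrable (fun ω => Real.exp (c * X i ω)) μ := by
    intro c i
    have h0 : Integrable (fun x => Real.exp (c * x)) (Measure.map (X i) μ) := by
      rw [hmap i]; exact integrable_exp_arc c
    exact (integrable_map_measure
      (Real.measurable_exp.comp (measurable_id.const_mul c)).aestronglyMeasurable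
      (hmeas i).aemeasurable).mp h0
  have hZmeas : ∀ i, Measurable (fun ω => a i * X i ω) := fun i => (hmeas i).const_mul (a i)
  have hZint : ∀ i, Integrable (fun ω => Real.exp (t * (a i * X i ω))) μ := by
    intro i
    have := hint_base (t * a i) i
    simpa [mul_assoc] using this
  have hmgfZ : ∀ i, mgf (fun ω => a i * X i ω) μ t
      = ∫ x, Real.exp ((t * a i) * x) ∂arcMeasure := by
    intro i
    have hg : AEStronglyMeasurable (fun x : ℝ => Real.exp ((t * a i) * x))
        (Measure.map (X i) μ) := by
      exact (Real.measurable_exp.comp ((measurable_id.const_mul _))).aestronglyMeasurable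
    rw [mgf, ← hmap i, integral_map (hmeas i).aemeasurable hg]
    simp_rw [mul_assoc]
  -- independence of the scaled variables
  have hind2 : iIndepFun (fun i ω => a i * X i ω) μ :=
    hindep.comp (fun i x => a i * x) (fun i => measurable_id.const_mul (a i))
  have hsum_eq : (fun ω => ∑ i, a i * X i ω) = (∑ i, fun ω => a i * X i ω) := by
    ext ω; rw [Finset.sum_apply]
  -- Chernoff bound
  have hintY : Integrable (fun ω => Real.exp (t * (∑ i, fun ω' => a i * X i ω') ω)) μ :=
    hind2.integrable_exp_mul_sum hZmeas (fun i _ => hZint i)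
  have chern := measure_ge_le_exp_mul_mgf (μ := μ)
    (X := fun ω => ∑ i, a i * X i ω) v ht0 (by simpa only [Finset.sum_apply] using hintY)
  have hmgf_eq : mgf (fun ω => ∑ i, a i * X i ω) μ t
      = ∏ i, mgf (fun ω => a i * X i ω) μ t := by
    rw [hsum_eq]
    exact hind2.mgf_sum hZmeas Finset.univ
  -- bound on the product of mgfs
  have hApart : ∏ i ∈ A, mgf (fun ω => a i * X i ω) μ t ≤ Real.exp (t * S) := by
    calc ∏ i ∈ A, mgf (fun ω => a i * X i ω) μ t
        ≤ ∏ i ∈ A, Real.exp (t * a i) := by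
          apply Finset.prod_le_prod (fun i _ => mgf_nonneg)
          intro i _
          rw [hmgfZ i]
          exact integral_exp_arc_le_of_nonneg (mul_nonneg ht0 (ha i).le)
      _ = Real.exp (∑ i ∈ A, t * a i) := (Real.exp_sum _ _).symm
      _ = Real.exp (t * S) := by rw [← Finset.mul_sum]
  have hBpart : ∏ i ∈ Aᶜ, mgf (fun ω => a i * X i ω) μ t ≤ Real.exp (t ^ 2 * Q / 4) := by
    calc ∏ i ∈ Aᶜ, mgf (fun ω => a i * X i ω) μ t
        ≤ ∏ i ∈ Aᶜ, Real.exp ((t * a i) ^ 2 / 4) := by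
          apply Finset.prod_le_prod (fun i _ => mgf_nonneg)
          intro i _
          rw [hmgfZ i]
          exact integral_exp_arc_le (t * a i)
      _ = Real.exp (∑ i ∈ Aᶜ, (t * a i) ^ 2 / 4) := (Real.exp_sum _ _).symm
      _ = Real.exp (t ^ 2 * Q / 4) := by
          congr 1
          rw [hQ, Finset.mul_sum, Finset.sum_div]
          congr 1; ext i; ring
  have hprod : ∏ i, mgf (fun ω => a i * X i ω) μ t
      ≤ Real.exp (t * S) * Real.exp (t ^ 2 * Q / 4) := by
    rw [← Finset.prod_mul_prod_compl A]
    exact mul_le_mul hApart hBpart (Finset.prod_nonneg fun i _ => mgf_nonneg)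
      (Real.exp_nonneg _)
  have hfinal : Real.exp (-t * v) * (Real.exp (t * S) * Real.exp (t ^ 2 * Q / 4))
      = Real.exp (-(w ^ 2) / Q) := by
    rw [← Real.exp_add, ← Real.exp_add]
    congr 1
    rw [ht, hw]
    field_simp
    ring
  have hexp_eq : -(v - S) ^ 2 / (2 * ((1 / 2) * Q)) = -(w ^ 2) / Q := by
    rw [hw]
    congr 1
    ring
  calc μ {ω | v < ∑ i, a i * X i ω}
      ≤ μ {ω | v ≤ ∑ i, a i * X i ω} := measure_mono (Set.setOf_subset_setOf.mpr (fun ω h => le_of_lt h))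
    _ ≤ ENNReal.ofReal (Real.exp (-(v - S) ^ 2 / (2 * ((1 / 2) * Q)))) := by
        rw [ENNReal.le_ofReal_iff_toReal_le (measure_ne_top μ _) (Real.exp_pos _).le]
        rw [hexp_eq, ← hfinal]
        calc (μ {ω | v ≤ ∑ i, a i * X i ω}).toReal
            ≤ Real.exp (-t * v) * mgf (fun ω => ∑ i, a i * X i ω) μ t := chern
          _ ≤ Real.exp (-t * v) * (Real.exp (t * S) * Real.exp (t ^ 2 * Q / 4)) := by
              rw [hmgf_eq]
              exact mul_le_mul_of_nonneg_left hprod (Real.exp_nonneg _)
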